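/- If every Boolean valuation that makes all formulas in Γ true makes A true, then there is a deduction of A from assumptions in Γ in the system C that has the subformula property: every formula occurring in the deduction is a subformula of A or of some formula in Γ. -/

import Mathlib

/- Milne's system **C** of classical propositional logic with general
introduction and general elimination rules (Kürbis, "Normalisation and
Subformula Property for a System of Classical Logic with Tarski's Rule").

Formulas are built from atoms by ¬, ∧, ∨, ⊃. -/
inductive Formula : Type
  | atom : ℕ → Formula
  | neg  : Formula → Formula
  | conj : Formula → Formula → Formula
  | disj : Formula → Formula → Formula
  | imp  : Formula → Formula → Formula
  deriving DecidableEq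

/-- Raw deduction trees of the system **C**.  Assumption occurrences carry a
label (natural number) marking their assumption class; each rule that
discharges assumptions records the label(s) of the class(es) it discharges.
Constructor arguments list first the labels, then the formulas figuring in the
rule, then the immediate subdeductions (major premise first for eliminations;
for introductions: the specific premise(s), then the deduction of the
arbitrary premise from the discharged major assumption).

* `ass ℓ A`           : the assumption `A`, in assumption class `ℓ`.
* `andI ℓ A B ΣA ΣB Π` : from `A`, `B` and `C`-from-`[A∧B]^ℓ` infer `C`.
* `andE ℓA ℓB A B M Π` : from `A∧B` and `C`-from-`[A]^ℓA,[B]^ℓB` infer `C`.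
* `orI₁ ℓ A B ΣA Π`    : from `A` and `C`-from-`[A∨B]^ℓ` infer `C`.
* `orI₂ ℓ A B ΣB Π`    : from `B` and `C`-from-`[A∨B]^ℓ` infer `C`.
* `orE ℓA ℓB A B M Π Ξ`: from `A∨B`, `C`-from-`[A]^ℓA`, `C`-from-`[B]^ℓB` infer `C`.
* `impI ℓ A B ΣB Π`    : from `B` and `C`-from-`[A⊃B]^ℓ` infer `C`.
* `tr ℓA ℓAB A B Π Ξ`  : Tarski's Rule: from `C`-from-`[A]^ℓA` and
                         `C`-from-`[A⊃B]^ℓAB` infer `C`.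
* `impE ℓ A B M ΣA Π`  : from `A⊃B`, `A` and `C`-from-`[B]^ℓ` infer `C`.
* `negI ℓA ℓnA A Π Ξ`  : from `C`-from-`[A]^ℓA` and `C`-from-`[¬A]^ℓnA` infer `C`.
* `negE A C M ΣA`      : from `¬A` and `A` infer any `C`. -/
inductive PT : Type
  | ass  : ℕ → Formula → PT
  | andI : ℕ → Formula → Formula → PT → PT → PT → PT
  | andE : ℕ → ℕ → Formula → Formula → PT → PT → PT
  | orI₁ : ℕ → Formula → Formula → PT → PT → PT
  | orI₂ : ℕ → Formula → Formula → PT → PT → PT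
  | orE  : ℕ → ℕ → Formula → Formula → PT → PT → PT → PT
  | impI : ℕ → Formula → Formula → PT → PT → PT
  | tr   : ℕ → ℕ → Formula → Formula → PT → PT → PT
  | impE : ℕ → Formula → Formula → PT → PT → PT → PT
  | negI : ℕ → ℕ → Formula → PT → PT → PT
  | negE : Formula → Formula → PT → PT → PT
  deriving DecidableEq

namespace PT

/-- The conclusion (root formula) of a deduction tree. -/
def concl : PT → Formula
  | .ass _ A => A
  | .andI _ _ _ _ _ r => r.concl
  | .andE _ _ _ _ _ q => q.concl
  | .orI₁ _ _ _ _ q => q.concl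
  | .orI₂ _ _ _ _ q => q.concl
  | .orE _ _ _ _ _ q _ => q.concl
  | .impI _ _ _ _ q => q.concl
  | .tr _ _ _ _ p _ => p.concl
  | .impE _ _ _ _ _ r => r.concl
  | .negI _ _ _ p _ => p.concl
  | .negE _ C _ _ => C

/-- The multiset of open (undischarged) labelled assumptions of a deduction. -/
def openAss : PT → Multiset (ℕ × Formula)
  | .ass ℓ A => {(ℓ, A)}
  | .andI ℓ _ _ p q r =>
      p.openAss + q.openAss + (r.openAss.filter fun z => z.1 ≠ ℓ)
  | .andE ℓA ℓB _ _ p q =>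
      p.openAss + (q.openAss.filter fun z => z.1 ≠ ℓA ∧ z.1 ≠ ℓB)
  | .orI₁ ℓ _ _ p q => p.openAss + (q.openAss.filter fun z => z.1 ≠ ℓ)
  | .orI₂ ℓ _ _ p q => p.openAss + (q.openAss.filter fun z => z.1 ≠ ℓ)
  | .orE ℓA ℓB _ _ p q r =>
      p.openAss + (q.openAss.filter fun z => z.1 ≠ ℓA) +
        (r.openAss.filter fun z => z.1 ≠ ℓB)
  | .impI ℓ _ _ p q => p.openAss + (q.openAss.filter fun z => z.1 ≠ ℓ)
  | .tr ℓA ℓAB _ _ p q =>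
      (p.openAss.filter fun z => z.1 ≠ ℓA) + (q.openAss.filter fun z => z.1 ≠ ℓAB)
  | .impE ℓ _ _ p q r =>
      p.openAss + q.openAss + (r.openAss.filter fun z => z.1 ≠ ℓ)
  | .negI ℓA ℓnA _ p q =>
      (p.openAss.filter fun z => z.1 ≠ ℓA) + (q.openAss.filter fun z => z.1 ≠ ℓnA)
  | .negE _ _ p q => p.openAss + q.openAss

/-- Correctness of a deduction tree: the subdeductions conclude the right
formulas, every open assumption in a discharged class has the form required
by the rule, and (ban on vacuous discharge above arbitrary premises) each
discharge actually discharges at least one assumption occurrence — in `∧E`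
at least one of the two classes `[A]`, `[B]` is non-empty, which reflects the
option of discharging only one of the two assumptions. -/
def wf : PT → Prop
  | .ass _ _ => True
  | .andI ℓ A B p q r => p.wf ∧ q.wf ∧ r.wf ∧ p.concl = A ∧ q.concl = B ∧
      (∀ F, (ℓ, F) ∈ r.openAss → F = Formula.conj A B) ∧
      (ℓ, Formula.conj A B) ∈ r.openAss
  | .andE ℓA ℓB A B p q => p.wf ∧ q.wf ∧ p.concl = Formula.conj A B ∧
      (∀ F, (ℓA, F) ∈ q.openAss → F = A) ∧ (∀ F, (ℓB, F) ∈ q.openAss → F = B) ∧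
      ((ℓA, A) ∈ q.openAss ∨ (ℓB, B) ∈ q.openAss)
  | .orI₁ ℓ A B p q => p.wf ∧ q.wf ∧ p.concl = A ∧
      (∀ F, (ℓ, F) ∈ q.openAss → F = Formula.disj A B) ∧
      (ℓ, Formula.disj A B) ∈ q.openAss
  | .orI₂ ℓ A B p q => p.wf ∧ q.wf ∧ p.concl = B ∧
      (∀ F, (ℓ, F) ∈ q.openAss → F = Formula.disj A B) ∧
      (ℓ, Formula.disj A B) ∈ q.openAss
  | .orE ℓA ℓB A B p q r => p.wf ∧ q.wf ∧ r.wf ∧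
      p.concl = Formula.disj A B ∧ q.concl = r.concl ∧
      (∀ F, (ℓA, F) ∈ q.openAss → F = A) ∧ (ℓA, A) ∈ q.openAss ∧
      (∀ F, (ℓB, F) ∈ r.openAss → F = B) ∧ (ℓB, B) ∈ r.openAss
  | .impI ℓ A B p q => p.wf ∧ q.wf ∧ p.concl = B ∧
      (∀ F, (ℓ, F) ∈ q.openAss → F = Formula.imp A B) ∧
      (ℓ, Formula.imp A B) ∈ q.openAss
  | .tr ℓA ℓAB A B p q => p.wf ∧ q.wf ∧ p.concl = q.concl ∧
      (∀ F, (ℓA, F) ∈ p.openAss → F = A) ∧ (ℓA, A) ∈ p.openAss ∧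
      (∀ F, (ℓAB, F) ∈ q.openAss → F = Formula.imp A B) ∧
      (ℓAB, Formula.imp A B) ∈ q.openAss
  | .impE ℓ A B p q r => p.wf ∧ q.wf ∧ r.wf ∧
      p.concl = Formula.imp A B ∧ q.concl = A ∧
      (∀ F, (ℓ, F) ∈ r.openAss → F = B) ∧ (ℓ, B) ∈ r.openAss
  | .negI ℓA ℓnA A p q => p.wf ∧ q.wf ∧ p.concl = q.concl ∧
      (∀ F, (ℓA, F) ∈ p.openAss → F = A) ∧ (ℓA, A) ∈ p.openAss ∧
      (∀ F, (ℓnA, F) ∈ q.openAss → F = Formula.neg A) ∧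
      (ℓnA, Formula.neg A) ∈ q.openAss
  | .negE A _ p q => p.wf ∧ q.wf ∧ p.concl = Formula.neg A ∧ q.concl = A

/-- The set of formulas that occur as undischarged assumptions of a deduction. -/
def assumptions (d : PT) : Set Formula := {A | ∃ ℓ, (ℓ, A) ∈ d.openAss}

end PT
/-- `Subf A B`: `A` is a subformula of `B`. -/
inductive Subf : Formula → Formula → Prop
  | refl (A : Formula) : Subf A A
  | neg {F A : Formula} : Subf F A → Subf F (Formula.neg A)
  | conjL {F A B : Formula} : Subf F A → Subf F (Formula.conj A B)
  | conjR {F A B : Formula} : Subf F B → Subf F (Formula.conj A B)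
  | disjL {F A B : Formula} : Subf F A → Subf F (Formula.disj A B)
  | disjR {F A B : Formula} : Subf F B → Subf F (Formula.disj A B)
  | impL {F A B : Formula} : Subf F A → Subf F (Formula.imp A B)
  | impR {F A B : Formula} : Subf F B → Subf F (Formula.imp A B)

namespace PT

/-- The multiset of all formula occurrences in a deduction: every occurrence
in a deduction is either an assumption (a leaf) or the conclusion of some rule
application (the root of a subdeduction). -/
def formulas : PT → Multiset Formula
  | .ass _ A => {A}
  | .andI ℓ A B p q r =>
      (PT.andI ℓ A B p q r).concl ::ₘ (p.formulas + q.formulas + r.formulas)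
  | .andE ℓA ℓB A B p q =>
      (PT.andE ℓA ℓB A B p q).concl ::ₘ (p.formulas + q.formulas)
  | .orI₁ ℓ A B p q => (PT.orI₁ ℓ A B p q).concl ::ₘ (p.formulas + q.formulas)
  | .orI₂ ℓ A B p q => (PT.orI₂ ℓ A B p q).concl ::ₘ (p.formulas + q.formulas)
  | .orE ℓA ℓB A B p q r =>
      (PT.orE ℓA ℓB A B p q r).concl ::ₘ (p.formulas + q.formulas + r.formulas)
  | .impI ℓ A B p q => (PT.impI ℓ A B p q).concl ::ₘ (p.formulas + q.formulas)
  | .tr ℓA ℓAB A B p q =>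
      (PT.tr ℓA ℓAB A B p q).concl ::ₘ (p.formulas + q.formulas)
  | .impE ℓ A B p q r =>
      (PT.impE ℓ A B p q r).concl ::ₘ (p.formulas + q.formulas + r.formulas)
  | .negI ℓA ℓnA A p q =>
      (PT.negI ℓA ℓnA A p q).concl ::ₘ (p.formulas + q.formulas)
  | .negE A C p q => C ::ₘ (p.formulas + q.formulas)

/-- A deduction has the *subformula property* if every formula occurring in it
is a subformula of its conclusion or of one of its undischarged assumptions. -/
def subformulaProperty (d : PT) : Prop :=
  ∀ F ∈ d.formulas, Subf F d.concl ∨ ∃ G ∈ d.assumptions, Subf F G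

end PT
/-- The value of a formula under a Boolean valuation of the atoms, by the
classical truth tables for ¬, ∧, ∨, ⊃. -/
def Formula.eval (v : ℕ → Bool) : Formula → Bool
  | .atom n => v n
  | .neg A => !(A.eval v)
  | .conj A B => A.eval v && B.eval v
  | .disj A B => A.eval v || B.eval v
  | .imp A B => !(A.eval v) || B.eval v

/-! ### Auxiliary development -/

namespace CAux

open Formula

/-- An injective code of formulas into natural numbers, used for labels. -/
def code : Formula → ℕ
  | .atom n => Nat.pair 0 n
  | .neg A => Nat.pair 1 (code A)
  | .conj A B => Nat.pair 2 (Nat.pair (code A) (code B))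
  | .disj A B => Nat.pair 3 (Nat.pair (code A) (code B))
  | .imp A B => Nat.pair 4 (Nat.pair (code A) (code B))

theorem code_inj : ∀ {A B : Formula}, code A = code B → A = B := by
  intro A
  induction A with
  | atom n => intro B h; cases B <;> simp [code, Nat.pair_eq_pair] at h <;> simp [h]
  | neg A ih => intro B h; cases B <;> simp [code, Nat.pair_eq_pair] at h <;> simp [ih h]
  | conj A₁ A₂ ih1 ih2 =>
      intro B h; cases B <;> simp [code, Nat.pair_eq_pair] at h
      simp [ih1 h.1, ih2 h.2]
  | disj A₁ A₂ ih1 ih2 =>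
      intro B h; cases B <;> simp [code, Nat.pair_eq_pair] at h
      simp [ih1 h.1, ih2 h.2]
  | imp A₁ A₂ ih1 ih2 =>
      intro B h; cases B <;> simp [code, Nat.pair_eq_pair] at h
      simp [ih1 h.1, ih2 h.2]

theorem subf_trans {F G H : Formula} (h1 : Subf F G) (h2 : Subf G H) : Subf F H := by
  induction h2 with
  | refl => exact h1
  | neg _ ih => exact Subf.neg ih
  | conjL _ ih => exact Subf.conjL ih
  | conjR _ ih => exact Subf.conjR ih
  | disjL _ ih => exact Subf.disjL ih
  | disjR _ ih => exact Subf.disjR ih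
  | impL _ ih => exact Subf.impL ih
  | impR _ ih => exact Subf.impR ih

/-- Size of a formula. -/
def fsize : Formula → ℕ
  | .atom _ => 1
  | .neg A => fsize A + 1
  | .conj A B => fsize A + fsize B + 1
  | .disj A B => fsize A + fsize B + 1
  | .imp A B => fsize A + fsize B + 1

theorem concl_mem_formulas : ∀ d : PT, d.concl ∈ d.formulas := by
  intro d
  cases d <;> simp [PT.formulas, PT.concl]

/-- All open assumptions are labelled by the code of their formula. -/
def Std (d : PT) : Prop := ∀ z ∈ d.openAss, z.1 = code z.2

/-- Derivability with standard labels, assumptions in `Γ`, all occurring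
formulas in `S`. -/
def Prov (S Γ : Set Formula) (C : Formula) : Prop :=
  ∃ d : PT, d.wf ∧ d.concl = C ∧ Std d ∧ (∀ z ∈ d.openAss, z.2 ∈ Γ) ∧
    ∀ F ∈ d.formulas, F ∈ S

theorem std_label {d : PT} (hd : Std d) {A F : Formula}
    (h : (code A, F) ∈ d.openAss) : F = A :=
  code_inj (hd _ h).symm

theorem mem_filter_ne {d : PT} (hd : Std d) {Γ : Set Formula} {A : Formula}
    (hΓ : ∀ z ∈ d.openAss, z.2 ∈ insert A Γ) :
    ∀ z ∈ d.openAss.filter (fun z => z.1 ≠ code A), z.2 ∈ Γ := by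
  intro z hz
  rw [Multiset.mem_filter] at hz
  rcases hΓ z hz.1 with h | h
  · exact absurd ((hd z hz.1).trans (by rw [h])) hz.2
  · exact h

theorem escape {d : PT} (hd : Std d) {Γ : Set Formula} {A : Formula}
    (hΓ : ∀ z ∈ d.openAss, z.2 ∈ insert A Γ)
    (h : (code A, A) ∉ d.openAss) : ∀ z ∈ d.openAss, z.2 ∈ Γ := by
  intro z hz
  rcases hΓ z hz with h' | h'
  · exfalso; apply h
    have := hd z hz
    have hz2 : z = (code A, A) := by
      rcases z with ⟨l, F⟩; simp_all
    rwa [hz2] at hz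
  · exact h'

theorem prov_mono {S Γ Γ' : Set Formula} {C : Formula} (h : Prov S Γ C)
    (hsub : Γ ⊆ Γ') : Prov S Γ' C := by
  obtain ⟨d, h1, h2, h3, h4, h5⟩ := h
  exact ⟨d, h1, h2, h3, fun z hz => hsub (h4 z hz), h5⟩

theorem prov_ass {S Γ : Set Formula} {C : Formula} (h : C ∈ Γ) (hS : C ∈ S) :
    Prov S Γ C := by
  refine ⟨PT.ass (code C) C, trivial, rfl, ?_, ?_, ?_⟩ <;>
    simp [PT.openAss, PT.formulas, Std, h, hS]

theorem prov_andI {S Γ : Set Formula} {A B : Formula} (hA : Prov S Γ A)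
    (hB : Prov S Γ B) (hS : Formula.conj A B ∈ S) : Prov S Γ (Formula.conj A B) := by
  obtain ⟨p, pw, pc, ps, pa, pf⟩ := hA
  obtain ⟨q, qw, qc, qs, qa, qf⟩ := hB
  set X := Formula.conj A B
  refine ⟨PT.andI (code X) A B p q (PT.ass (code X) X), ?_, rfl, ?_, ?_, ?_⟩
  · exact ⟨pw, qw, trivial, pc, qc, by simp [PT.openAss, X], by simp [PT.openAss, X]⟩
  · intro z hz
    simp only [PT.openAss, Multiset.mem_add, Multiset.mem_filter,
      Multiset.mem_singleton] at hz
    rcases hz with (hz | hz) | ⟨hz, _⟩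
    exacts [ps z hz, qs z hz, by simp [hz]]
  · intro z hz
    simp only [PT.openAss, Multiset.mem_add, Multiset.mem_filter,
      Multiset.mem_singleton] at hz
    rcases hz with (hz | hz) | ⟨hz, hz2⟩
    exacts [pa z hz, qa z hz, absurd (by simp [hz]) hz2]
  · intro F hF
    simp only [PT.formulas, PT.concl, Multiset.mem_cons, Multiset.mem_add,
      Multiset.mem_singleton] at hF
    rcases hF with h | (h | h) | h
    exacts [h ▸ hS, pf F h, qf F h, h ▸ hS]

theorem prov_orI₁ {S Γ : Set Formula} {A B : Formula} (hA : Prov S Γ A)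
    (hS : Formula.disj A B ∈ S) : Prov S Γ (Formula.disj A B) := by
  obtain ⟨p, pw, pc, ps, pa, pf⟩ := hA
  set X := Formula.disj A B
  refine ⟨PT.orI₁ (code X) A B p (PT.ass (code X) X), ?_, rfl, ?_, ?_, ?_⟩
  · exact ⟨pw, trivial, pc, by simp [PT.openAss, X], by simp [PT.openAss, X]⟩
  · intro z hz
    simp only [PT.openAss, Multiset.mem_add, Multiset.mem_filter,
      Multiset.mem_singleton] at hz
    rcases hz with hz | ⟨hz, _⟩
    exacts [ps z hz, by simp [hz]]
  · intro z hz
    simp only [PT.openAss, Multiset.mem_add, Multiset.mem_filter,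
      Multiset.mem_singleton] at hz
    rcases hz with hz | ⟨hz, hz2⟩
    exacts [pa z hz, absurd (by simp [hz]) hz2]
  · intro F hF
    simp only [PT.formulas, PT.concl, Multiset.mem_cons, Multiset.mem_add,
      Multiset.mem_singleton] at hF
    rcases hF with h | h | h
    exacts [h ▸ hS, pf F h, h ▸ hS]

theorem prov_orI₂ {S Γ : Set Formula} {A B : Formula} (hB : Prov S Γ B)
    (hS : Formula.disj A B ∈ S) : Prov S Γ (Formula.disj A B) := by
  obtain ⟨p, pw, pc, ps, pa, pf⟩ := hB
  set X := Formula.disj A B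
  refine ⟨PT.orI₂ (code X) A B p (PT.ass (code X) X), ?_, rfl, ?_, ?_, ?_⟩
  · exact ⟨pw, trivial, pc, by simp [PT.openAss, X], by simp [PT.openAss, X]⟩
  · intro z hz
    simp only [PT.openAss, Multiset.mem_add, Multiset.mem_filter,
      Multiset.mem_singleton] at hz
    rcases hz with hz | ⟨hz, _⟩
    exacts [ps z hz, by simp [hz]]
  · intro z hz
    simp only [PT.openAss, Multiset.mem_add, Multiset.mem_filter,
      Multiset.mem_singleton] at hz
    rcases hz with hz | ⟨hz, hz2⟩
    exacts [pa z hz, absurd (by simp [hz]) hz2]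
  · intro F hF
    simp only [PT.formulas, PT.concl, Multiset.mem_cons, Multiset.mem_add,
      Multiset.mem_singleton] at hF
    rcases hF with h | h | h
    exacts [h ▸ hS, pf F h, h ▸ hS]

theorem prov_impI {S Γ : Set Formula} {A B : Formula} (hB : Prov S Γ B)
    (hS : Formula.imp A B ∈ S) : Prov S Γ (Formula.imp A B) := by
  obtain ⟨p, pw, pc, ps, pa, pf⟩ := hB
  set X := Formula.imp A B
  refine ⟨PT.impI (code X) A B p (PT.ass (code X) X), ?_, rfl, ?_, ?_, ?_⟩
  · exact ⟨pw, trivial, pc, by simp [PT.openAss, X], by simp [PT.openAss, X]⟩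
  · intro z hz
    simp only [PT.openAss, Multiset.mem_add, Multiset.mem_filter,
      Multiset.mem_singleton] at hz
    rcases hz with hz | ⟨hz, _⟩
    exacts [ps z hz, by simp [hz]]
  · intro z hz
    simp only [PT.openAss, Multiset.mem_add, Multiset.mem_filter,
      Multiset.mem_singleton] at hz
    rcases hz with hz | ⟨hz, hz2⟩
    exacts [pa z hz, absurd (by simp [hz]) hz2]
  · intro F hF
    simp only [PT.formulas, PT.concl, Multiset.mem_cons, Multiset.mem_add,
      Multiset.mem_singleton] at hF
    rcases hF with h | h | h
    exacts [h ▸ hS, pf F h, h ▸ hS]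

theorem prov_negE {S Γ : Set Formula} {A C : Formula} (h : Formula.neg A ∈ Γ)
    (hA : Prov S Γ A) (hnS : Formula.neg A ∈ S) (hCS : C ∈ S) : Prov S Γ C := by
  obtain ⟨q, qw, qc, qs, qa, qf⟩ := hA
  refine ⟨PT.negE A C (PT.ass (code (Formula.neg A)) (Formula.neg A)) q,
    ⟨trivial, qw, rfl, qc⟩, rfl, ?_, ?_, ?_⟩
  · intro z hz
    simp only [PT.openAss, Multiset.mem_add, Multiset.mem_singleton] at hz
    rcases hz with hz | hz
    exacts [by simp [hz], qs z hz]
  · intro z hz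
    simp only [PT.openAss, Multiset.mem_add, Multiset.mem_singleton] at hz
    rcases hz with hz | hz
    exacts [by simp [hz, h], qa z hz]
  · intro F hF
    simp only [PT.formulas, Multiset.mem_cons, Multiset.mem_add,
      Multiset.mem_singleton] at hF
    rcases hF with h | h | h
    exacts [h ▸ hCS, h ▸ hnS, qf F h]

theorem prov_andE {S Γ : Set Formula} {A B C : Formula} (h : Formula.conj A B ∈ Γ)
    (hS : Formula.conj A B ∈ S) (hq : Prov S (insert A (insert B Γ)) C) :
    Prov S Γ C := by
  obtain ⟨q, qw, qc, qs, qa, qf⟩ := hq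
  by_cases hA' : (code A, A) ∈ q.openAss
  case neg =>
    by_cases hB' : (code B, B) ∈ q.openAss
    case neg =>
      exact ⟨q, qw, qc, qs, fun z hz => escape qs (escape qs qa hA') hB' z hz, qf⟩
    case pos =>
      refine ⟨PT.andE (code A) (code B) A B
        (PT.ass (code (Formula.conj A B)) (Formula.conj A B)) q,
        ⟨trivial, qw, rfl, fun F hF => std_label qs hF,
          fun F hF => std_label qs hF, Or.inr hB'⟩, qc, ?_, ?_, ?_⟩
      · intro z hz
        simp only [PT.openAss, Multiset.mem_add, Multiset.mem_filter,
          Multiset.mem_singleton] at hz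
        rcases hz with hz | ⟨hz, _⟩
        exacts [by simp [hz], qs z hz]
      · intro z hz
        simp only [PT.openAss, Multiset.mem_add, Multiset.mem_filter,
          Multiset.mem_singleton] at hz
        rcases hz with hz | ⟨hz, hz2, hz3⟩
        · simp [hz, h]
        · rcases qa z hz with h' | h' | h'
          · exact absurd ((qs z hz).trans (by rw [h'])) hz2
          · exact absurd ((qs z hz).trans (by rw [h'])) hz3
          · exact h'
      · intro F hF
        simp only [PT.formulas, PT.concl, Multiset.mem_cons, Multiset.mem_add,
          Multiset.mem_singleton] at hF
        rcases hF with hF | hF | hF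
        exacts [hF ▸ qf _ (concl_mem_formulas q), hF ▸ hS, qf F hF]
  case pos =>
    refine ⟨PT.andE (code A) (code B) A B
      (PT.ass (code (Formula.conj A B)) (Formula.conj A B)) q,
      ⟨trivial, qw, rfl, fun F hF => std_label qs hF,
        fun F hF => std_label qs hF, Or.inl hA'⟩, qc, ?_, ?_, ?_⟩
    · intro z hz
      simp only [PT.openAss, Multiset.mem_add, Multiset.mem_filter,
        Multiset.mem_singleton] at hz
      rcases hz with hz | ⟨hz, _⟩
      exacts [by simp [hz], qs z hz]
    · intro z hz
      simp only [PT.openAss, Multiset.mem_add, Multiset.mem_filter,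
        Multiset.mem_singleton] at hz
      rcases hz with hz | ⟨hz, hz2, hz3⟩
      · simp [hz, h]
      · rcases qa z hz with h' | h' | h'
        · exact absurd ((qs z hz).trans (by rw [h'])) hz2
        · exact absurd ((qs z hz).trans (by rw [h'])) hz3
        · exact h'
    · intro F hF
      simp only [PT.formulas, PT.concl, Multiset.mem_cons, Multiset.mem_add,
        Multiset.mem_singleton] at hF
      rcases hF with hF | hF | hF
      exacts [hF ▸ qf _ (concl_mem_formulas q), hF ▸ hS, qf F hF]

theorem prov_orE {S Γ : Set Formula} {A B C : Formula} (h : Formula.disj A B ∈ Γ)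
    (hS : Formula.disj A B ∈ S) (h1 : Prov S (insert A Γ) C)
    (h2 : Prov S (insert B Γ) C) : Prov S Γ C := by
  obtain ⟨q, qw, qc, qs, qa, qf⟩ := h1
  obtain ⟨r, rw, rc, rs, ra, rf⟩ := h2
  by_cases hA' : (code A, A) ∈ q.openAss
  case neg => exact ⟨q, qw, qc, qs, escape qs qa hA', qf⟩
  by_cases hB' : (code B, B) ∈ r.openAss
  case neg => exact ⟨r, rw, rc, rs, escape rs ra hB', rf⟩
  refine ⟨PT.orE (code A) (code B) A B
    (PT.ass (code (Formula.disj A B)) (Formula.disj A B)) q r,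
    ⟨trivial, qw, rw, rfl, qc.trans rc.symm, fun F hF => std_label qs hF, hA',
      fun F hF => std_label rs hF, hB'⟩, qc, ?_, ?_, ?_⟩
  · intro z hz
    simp only [PT.openAss, Multiset.mem_add, Multiset.mem_filter,
      Multiset.mem_singleton] at hz
    rcases hz with (hz | ⟨hz, _⟩) | ⟨hz, _⟩
    exacts [by simp [hz], qs z hz, rs z hz]
  · intro z hz
    simp only [PT.openAss, Multiset.mem_add, Multiset.mem_filter,
      Multiset.mem_singleton] at hz
    rcases hz with (hz | hz) | hz
    · simp [hz, h]
    · exact mem_filter_ne qs qa z (Multiset.mem_filter.2 hz)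
    · exact mem_filter_ne rs ra z (Multiset.mem_filter.2 hz)
  · intro F hF
    simp only [PT.formulas, PT.concl, Multiset.mem_cons, Multiset.mem_add,
      Multiset.mem_singleton] at hF
    rcases hF with hF | (hF | hF) | hF
    exacts [hF ▸ qf _ (concl_mem_formulas q), hF ▸ hS, qf F hF, rf F hF]

theorem prov_impE {S Γ : Set Formula} {A B C : Formula} (h : Formula.imp A B ∈ Γ)
    (hS : Formula.imp A B ∈ S) (hA : Prov S Γ A)
    (hr : Prov S (insert B Γ) C) : Prov S Γ C := by
  obtain ⟨q, qw, qc, qs, qa, qf⟩ := hA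
  obtain ⟨r, rw, rc, rs, ra, rf⟩ := hr
  by_cases hB' : (code B, B) ∈ r.openAss
  case neg => exact ⟨r, rw, rc, rs, escape rs ra hB', rf⟩
  refine ⟨PT.impE (code B) A B
    (PT.ass (code (Formula.imp A B)) (Formula.imp A B)) q r,
    ⟨trivial, qw, rw, rfl, qc, fun F hF => std_label rs hF, hB'⟩, rc, ?_, ?_, ?_⟩
  · intro z hz
    simp only [PT.openAss, Multiset.mem_add, Multiset.mem_filter,
      Multiset.mem_singleton] at hz
    rcases hz with (hz | hz) | ⟨hz, _⟩
    exacts [by simp [hz], qs z hz, rs z hz]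
  · intro z hz
    simp only [PT.openAss, Multiset.mem_add, Multiset.mem_filter,
      Multiset.mem_singleton] at hz
    rcases hz with (hz | hz) | hz
    · simp [hz, h]
    · exact qa z hz
    · exact mem_filter_ne rs ra z (Multiset.mem_filter.2 hz)
  · intro F hF
    simp only [PT.formulas, PT.concl, Multiset.mem_cons, Multiset.mem_add,
      Multiset.mem_singleton] at hF
    rcases hF with hF | (hF | hF) | hF
    exacts [hF ▸ rf _ (concl_mem_formulas r), hF ▸ hS, qf F hF, rf F hF]

theorem prov_tr {S Γ : Set Formula} {A B C : Formula}
    (h1 : Prov S (insert A Γ) C)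
    (h2 : Prov S (insert (Formula.imp A B) Γ) C) : Prov S Γ C := by
  obtain ⟨p, pw, pc, ps, pa, pf⟩ := h1
  obtain ⟨q, qw, qc, qs, qa, qf⟩ := h2
  by_cases hA' : (code A, A) ∈ p.openAss
  case neg => exact ⟨p, pw, pc, ps, escape ps pa hA', pf⟩
  by_cases hX' : (code (Formula.imp A B), Formula.imp A B) ∈ q.openAss
  case neg => exact ⟨q, qw, qc, qs, escape qs qa hX', qf⟩
  refine ⟨PT.tr (code A) (code (Formula.imp A B)) A B p q,
    ⟨pw, qw, pc.trans qc.symm, fun F hF => std_label ps hF, hA',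
      fun F hF => std_label qs hF, hX'⟩, pc, ?_, ?_, ?_⟩
  · intro z hz
    simp only [PT.openAss, Multiset.mem_add, Multiset.mem_filter] at hz
    rcases hz with ⟨hz, _⟩ | ⟨hz, _⟩
    exacts [ps z hz, qs z hz]
  · intro z hz
    simp only [PT.openAss, Multiset.mem_add] at hz
    rcases hz with hz | hz
    exacts [mem_filter_ne ps pa z hz, mem_filter_ne qs qa z hz]
  · intro F hF
    simp only [PT.formulas, PT.concl, Multiset.mem_cons, Multiset.mem_add] at hF
    rcases hF with hF | hF | hF
    exacts [hF ▸ pf _ (concl_mem_formulas p), pf F hF, qf F hF]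

theorem prov_negI {S Γ : Set Formula} {A C : Formula}
    (h1 : Prov S (insert A Γ) C)
    (h2 : Prov S (insert (Formula.neg A) Γ) C) : Prov S Γ C := by
  obtain ⟨p, pw, pc, ps, pa, pf⟩ := h1
  obtain ⟨q, qw, qc, qs, qa, qf⟩ := h2
  by_cases hA' : (code A, A) ∈ p.openAss
  case neg => exact ⟨p, pw, pc, ps, escape ps pa hA', pf⟩
  by_cases hX' : (code (Formula.neg A), Formula.neg A) ∈ q.openAss
  case neg => exact ⟨q, qw, qc, qs, escape qs qa hX', qf⟩
  refine ⟨PT.negI (code A) (code (Formula.neg A)) A p q,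
    ⟨pw, qw, pc.trans qc.symm, fun F hF => std_label ps hF, hA',
      fun F hF => std_label qs hF, hX'⟩, pc, ?_, ?_, ?_⟩
  · intro z hz
    simp only [PT.openAss, Multiset.mem_add, Multiset.mem_filter] at hz
    rcases hz with ⟨hz, _⟩ | ⟨hz, _⟩
    exacts [ps z hz, qs z hz]
  · intro z hz
    simp only [PT.openAss, Multiset.mem_add] at hz
    rcases hz with hz | hz
    exacts [mem_filter_ne ps pa z hz, mem_filter_ne qs qa z hz]
  · intro F hF
    simp only [PT.formulas, PT.concl, Multiset.mem_cons, Multiset.mem_add] at hF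
    rcases hF with hF | hF | hF
    exacts [hF ▸ pf _ (concl_mem_formulas p), pf F hF, qf F hF]

theorem fsize_pos (X : Formula) : 1 ≤ fsize X := by
  cases X <;> simp [fsize]

theorem sum_erase {P : List Formula} {X : Formula} (h : X ∈ P) :
    (P.map fsize).sum = fsize X + ((P.erase X).map fsize).sum := by
  have h2 := ((List.perm_cons_erase h).map fsize).sum_eq
  simpa using h2

theorem main (S : Set Formula) (hSsub : ∀ F G, Subf F G → G ∈ S → F ∈ S)
    (C₀ : Formula) (hC₀ : C₀ ∈ S) :
    ∀ n : ℕ, ∀ P Θ : List Formula, ∀ Γ : Set Formula,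
      (P.map fsize).sum + (Θ.map fsize).sum ≤ n →
      (∀ X ∈ P, X ∈ S) → (∀ X ∈ P, X ∈ Γ) → (∀ D ∈ Θ, D ∈ S) →
      (∀ v : ℕ → Bool, (∀ X ∈ P, X.eval v = true) → ∃ D ∈ Θ, D.eval v = true) →
      (∀ D ∈ Θ, ∀ Γ' : Set Formula, Γ ⊆ Γ' → Prov S Γ' D → Prov S Γ' C₀) →
      Prov S Γ C₀ := by
  intro n
  induction n using Nat.strong_induction_on with
  | _ n IH =>
  intro P Θ Γ hn hPS hPΓ hΘS hsem hκ
  by_cases hPatom : ∀ X ∈ P, ∃ m, X = Formula.atom m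
  · by_cases hΘatom : ∀ D ∈ Θ, ∃ m, D = Formula.atom m
    · -- leaf case
      set v : ℕ → Bool := fun m => decide (Formula.atom m ∈ P) with hv
      have hvP : ∀ X ∈ P, X.eval v = true := by
        intro X hX
        obtain ⟨m, rfl⟩ := hPatom X hX
        simpa [Formula.eval, hv] using hX
      obtain ⟨D, hD, hDv⟩ := hsem v hvP
      obtain ⟨m, rfl⟩ := hΘatom D hD
      have hmem : Formula.atom m ∈ P := by simpa [Formula.eval, hv] using hDv
      exact hκ _ hD Γ subset_rfl (prov_ass (hPΓ _ hmem) (hΘS _ hD))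
    · -- a compound formula in Θ
      push_neg at hΘatom
      obtain ⟨X, hX, hXna⟩ := hΘatom
      have hXS := hΘS X hX
      have e1 := sum_erase hX
      cases X with
      | atom m => exact absurd rfl (hXna m)
      | neg A =>
          have hf : fsize (Formula.neg A) = fsize A + 1 := rfl
          have hAS : A ∈ S := hSsub _ _ (Subf.neg (Subf.refl A)) hXS
          have r1 : Prov S (insert A Γ) C₀ := by
            refine IH (n-1) (by omega) (A::P) ((Θ.erase (Formula.neg A))) (insert A Γ)
              ?_ ?_ ?_ ?_ ?_ ?_
            · simp only [List.map_cons, List.sum_cons]; omega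
            · intro Y hY
              rcases List.mem_cons.1 hY with rfl | hY'
              exacts [hAS, hPS Y hY']
            · intro Y hY
              rcases List.mem_cons.1 hY with rfl | hY'
              exacts [Set.mem_insert _ _, Set.mem_insert_of_mem _ (hPΓ Y hY')]
            · exact fun D hD => hΘS D (List.mem_of_mem_erase hD)
            · intro v hv
              have hva : A.eval v = true := hv A (List.mem_cons_self)
              obtain ⟨D, hD, hDv⟩ := hsem v
                (fun Y hY => hv Y (List.mem_cons_of_mem _ hY))
              by_cases hDX : D = Formula.neg A
              · rw [hDX] at hDv; simp [Formula.eval, hva] at hDv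
              · exact ⟨D, (List.mem_erase_of_ne hDX).2 hD, hDv⟩
            · exact fun D hD Γ' hΓ' pD =>
                hκ D (List.mem_of_mem_erase hD) Γ' ((Set.subset_insert _ _).trans hΓ') pD
          have q : Prov S (insert (Formula.neg A) Γ) C₀ :=
            hκ _ hX _ (Set.subset_insert _ _) (prov_ass (Set.mem_insert _ _) hXS)
          exact prov_negI r1 q
      | conj A B =>
          have hf : fsize (Formula.conj A B) = fsize A + fsize B + 1 := rfl
          have hAS : A ∈ S := hSsub _ _ (Subf.conjL (Subf.refl A)) hXS
          have hBS : B ∈ S := hSsub _ _ (Subf.conjR (Subf.refl B)) hXS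
          refine IH (n-1) (by omega) P (A :: Θ.erase (Formula.conj A B)) Γ
            ?_ hPS hPΓ ?_ ?_ ?_
          · simp only [List.map_cons, List.sum_cons]; omega
          · intro D hD
            rcases List.mem_cons.1 hD with rfl | hD'
            exacts [hAS, hΘS D (List.mem_of_mem_erase hD')]
          · intro v hv
            obtain ⟨D, hD, hDv⟩ := hsem v hv
            by_cases hDX : D = Formula.conj A B
            · rw [hDX] at hDv
              simp only [Formula.eval, Bool.and_eq_true] at hDv
              exact ⟨A, List.mem_cons_self, hDv.1⟩
            · exact ⟨D, List.mem_cons_of_mem _ ((List.mem_erase_of_ne hDX).2 hD), hDv⟩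
          · intro D hD Γ' hΓ' pD
            rcases List.mem_cons.1 hD with rfl | hD'
            · -- handler for A: run the second branch
              refine IH (n-1) (by omega) P (B :: Θ.erase (Formula.conj D B)) Γ'
                ?_ hPS (fun Y hY => hΓ' (hPΓ Y hY)) ?_ ?_ ?_
              · simp only [List.map_cons, List.sum_cons]; omega
              · intro E hE
                rcases List.mem_cons.1 hE with rfl | hE'
                exacts [hBS, hΘS E (List.mem_of_mem_erase hE')]
              · intro v hv
                obtain ⟨E, hE, hEv⟩ := hsem v hv
                by_cases hEX : E = Formula.conj D B
                · rw [hEX] at hEv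
                  simp only [Formula.eval, Bool.and_eq_true] at hEv
                  exact ⟨B, List.mem_cons_self, hEv.2⟩
                · exact ⟨E, List.mem_cons_of_mem _ ((List.mem_erase_of_ne hEX).2 hE), hEv⟩
              · intro E hE Γ'' hΓ'' pE
                rcases List.mem_cons.1 hE with rfl | hE'
                · exact hκ _ hX Γ'' (hΓ'.trans hΓ'')
                    (prov_andI (prov_mono pD hΓ'') pE hXS)
                · exact hκ E (List.mem_of_mem_erase hE') Γ'' (hΓ'.trans hΓ'') pE
            · exact hκ D (List.mem_of_mem_erase hD') Γ' hΓ' pD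
      | disj A B =>
          have hf : fsize (Formula.disj A B) = fsize A + fsize B + 1 := rfl
          have hAS : A ∈ S := hSsub _ _ (Subf.disjL (Subf.refl A)) hXS
          have hBS : B ∈ S := hSsub _ _ (Subf.disjR (Subf.refl B)) hXS
          refine IH (n-1) (by omega) P (A :: B :: Θ.erase (Formula.disj A B)) Γ
            ?_ hPS hPΓ ?_ ?_ ?_
          · simp only [List.map_cons, List.sum_cons]; omega
          · intro D hD
            rcases List.mem_cons.1 hD with rfl | hD'
            · exact hAS
            rcases List.mem_cons.1 hD' with rfl | hD''
            exacts [hBS, hΘS D (List.mem_of_mem_erase hD'')]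
          · intro v hv
            obtain ⟨D, hD, hDv⟩ := hsem v hv
            by_cases hDX : D = Formula.disj A B
            · rw [hDX] at hDv
              simp only [Formula.eval, Bool.or_eq_true] at hDv
              rcases hDv with h' | h'
              exacts [⟨A, List.mem_cons_self, h'⟩,
                ⟨B, List.mem_cons_of_mem _ (List.mem_cons_self), h'⟩]
            · exact ⟨D, List.mem_cons_of_mem _
                (List.mem_cons_of_mem _ ((List.mem_erase_of_ne hDX).2 hD)), hDv⟩
          · intro D hD Γ' hΓ' pD
            rcases List.mem_cons.1 hD with rfl | hD'
            · exact hκ _ hX Γ' hΓ' (prov_orI₁ pD hXS)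
            rcases List.mem_cons.1 hD' with rfl | hD''
            · exact hκ _ hX Γ' hΓ' (prov_orI₂ pD hXS)
            · exact hκ D (List.mem_of_mem_erase hD'') Γ' hΓ' pD
      | imp A B =>
          have hf : fsize (Formula.imp A B) = fsize A + fsize B + 1 := rfl
          have hAS : A ∈ S := hSsub _ _ (Subf.impL (Subf.refl A)) hXS
          have hBS : B ∈ S := hSsub _ _ (Subf.impR (Subf.refl B)) hXS
          have r1 : Prov S (insert A Γ) C₀ := by
            refine IH (n-1) (by omega) (A :: P) (B :: Θ.erase (Formula.imp A B))
              (insert A Γ) ?_ ?_ ?_ ?_ ?_ ?_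
            · simp only [List.map_cons, List.sum_cons]; omega
            · intro Y hY
              rcases List.mem_cons.1 hY with rfl | hY'
              exacts [hAS, hPS Y hY']
            · intro Y hY
              rcases List.mem_cons.1 hY with rfl | hY'
              exacts [Set.mem_insert _ _, Set.mem_insert_of_mem _ (hPΓ Y hY')]
            · intro D hD
              rcases List.mem_cons.1 hD with rfl | hD'
              exacts [hBS, hΘS D (List.mem_of_mem_erase hD')]
            · intro v hv
              have hva : A.eval v = true := hv A (List.mem_cons_self)
              obtain ⟨D, hD, hDv⟩ := hsem v
                (fun Y hY => hv Y (List.mem_cons_of_mem _ hY))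
              by_cases hDX : D = Formula.imp A B
              · rw [hDX] at hDv
                simp only [Formula.eval, hva, Bool.not_true, Bool.false_or] at hDv
                exact ⟨B, List.mem_cons_self, hDv⟩
              · exact ⟨D, List.mem_cons_of_mem _ ((List.mem_erase_of_ne hDX).2 hD), hDv⟩
            · intro D hD Γ' hΓ' pD
              rcases List.mem_cons.1 hD with rfl | hD'
              · exact hκ _ hX Γ' ((Set.subset_insert _ _).trans hΓ') (prov_impI pD hXS)
              · exact hκ D (List.mem_of_mem_erase hD') Γ'
                  ((Set.subset_insert _ _).trans hΓ') pD
          have q : Prov S (insert (Formula.imp A B) Γ) C₀ :=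
            hκ _ hX _ (Set.subset_insert _ _) (prov_ass (Set.mem_insert _ _) hXS)
          exact prov_tr r1 q
  · -- a compound formula in P
    push_neg at hPatom
    obtain ⟨X, hX, hXna⟩ := hPatom
    have hXS := hPS X hX
    have hXΓ := hPΓ X hX
    have e1 := sum_erase hX
    cases X with
    | atom m => exact absurd rfl (hXna m)
    | neg A =>
        have hf : fsize (Formula.neg A) = fsize A + 1 := rfl
        have hAS : A ∈ S := hSsub _ _ (Subf.neg (Subf.refl A)) hXS
        refine IH (n-1) (by omega) (P.erase (Formula.neg A)) (A :: Θ) Γ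
          ?_ ?_ ?_ ?_ ?_ ?_
        · simp only [List.map_cons, List.sum_cons]; omega
        · exact fun Y hY => hPS Y (List.mem_of_mem_erase hY)
        · exact fun Y hY => hPΓ Y (List.mem_of_mem_erase hY)
        · intro D hD
          rcases List.mem_cons.1 hD with rfl | hD'
          exacts [hAS, hΘS D hD']
        · intro v hv
          by_cases hva : A.eval v = true
          · exact ⟨A, List.mem_cons_self, hva⟩
          · have hvP : ∀ Y ∈ P, Y.eval v = true := by
              intro Y hY
              by_cases hYX : Y = Formula.neg A
              · have hva' : A.eval v = false := by
                  cases h' : A.eval v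
                  · rfl
                  · exact absurd h' hva
                rw [hYX]; simp [Formula.eval, hva']
              · exact hv Y ((List.mem_erase_of_ne hYX).2 hY)
            obtain ⟨D, hD, hDv⟩ := hsem v hvP
            exact ⟨D, List.mem_cons_of_mem _ hD, hDv⟩
        · intro D hD Γ' hΓ' pD
          rcases List.mem_cons.1 hD with rfl | hD'
          · exact prov_negE (hΓ' hXΓ) pD hXS hC₀
          · exact hκ D hD' Γ' hΓ' pD
    | conj A B =>
        have hf : fsize (Formula.conj A B) = fsize A + fsize B + 1 := rfl
        have hAS : A ∈ S := hSsub _ _ (Subf.conjL (Subf.refl A)) hXS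
        have hBS : B ∈ S := hSsub _ _ (Subf.conjR (Subf.refl B)) hXS
        refine prov_andE hXΓ hXS ?_
        refine IH (n-1) (by omega) (A :: B :: P.erase (Formula.conj A B)) Θ
          (insert A (insert B Γ)) ?_ ?_ ?_ hΘS ?_ ?_
        · simp only [List.map_cons, List.sum_cons]; omega
        · intro Y hY
          rcases List.mem_cons.1 hY with rfl | hY'
          · exact hAS
          rcases List.mem_cons.1 hY' with rfl | hY''
          exacts [hBS, hPS Y (List.mem_of_mem_erase hY'')]
        · intro Y hY
          rcases List.mem_cons.1 hY with rfl | hY'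
          · exact Set.mem_insert _ _
          rcases List.mem_cons.1 hY' with rfl | hY''
          exacts [Set.mem_insert_of_mem _ (Set.mem_insert _ _),
            Set.mem_insert_of_mem _ (Set.mem_insert_of_mem _
              (hPΓ Y (List.mem_of_mem_erase hY'')))]
        · intro v hv
          apply hsem v
          intro Y hY
          by_cases hYX : Y = Formula.conj A B
          · rw [hYX]
            simp only [Formula.eval, Bool.and_eq_true]
            exact ⟨hv A (List.mem_cons_self),
              hv B (List.mem_cons_of_mem _ (List.mem_cons_self))⟩
          · exact hv Y (List.mem_cons_of_mem _ (List.mem_cons_of_mem _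
              ((List.mem_erase_of_ne hYX).2 hY)))
        · exact fun D hD Γ' hΓ' pD => hκ D hD Γ'
            ((Set.subset_insert _ _).trans ((Set.subset_insert _ _).trans hΓ')) pD
    | disj A B =>
        have hf : fsize (Formula.disj A B) = fsize A + fsize B + 1 := rfl
        have hAS : A ∈ S := hSsub _ _ (Subf.disjL (Subf.refl A)) hXS
        have hBS : B ∈ S := hSsub _ _ (Subf.disjR (Subf.refl B)) hXS
        refine prov_orE hXΓ hXS ?_ ?_
        · refine IH (n-1) (by omega) (A :: P.erase (Formula.disj A B)) Θ
            (insert A Γ) ?_ ?_ ?_ hΘS ?_ ?_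
          · simp only [List.map_cons, List.sum_cons]; omega
          · intro Y hY
            rcases List.mem_cons.1 hY with rfl | hY'
            exacts [hAS, hPS Y (List.mem_of_mem_erase hY')]
          · intro Y hY
            rcases List.mem_cons.1 hY with rfl | hY'
            exacts [Set.mem_insert _ _,
              Set.mem_insert_of_mem _ (hPΓ Y (List.mem_of_mem_erase hY'))]
          · intro v hv
            apply hsem v
            intro Y hY
            by_cases hYX : Y = Formula.disj A B
            · rw [hYX]
              simp only [Formula.eval, Bool.or_eq_true]
              exact Or.inl (hv A (List.mem_cons_self))
            · exact hv Y (List.mem_cons_of_mem _ ((List.mem_erase_of_ne hYX).2 hY))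
          · exact fun D hD Γ' hΓ' pD => hκ D hD Γ'
              ((Set.subset_insert _ _).trans hΓ') pD
        · refine IH (n-1) (by omega) (B :: P.erase (Formula.disj A B)) Θ
            (insert B Γ) ?_ ?_ ?_ hΘS ?_ ?_
          · simp only [List.map_cons, List.sum_cons]; omega
          · intro Y hY
            rcases List.mem_cons.1 hY with rfl | hY'
            exacts [hBS, hPS Y (List.mem_of_mem_erase hY')]
          · intro Y hY
            rcases List.mem_cons.1 hY with rfl | hY'
            exacts [Set.mem_insert _ _,
              Set.mem_insert_of_mem _ (hPΓ Y (List.mem_of_mem_erase hY'))]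
          · intro v hv
            apply hsem v
            intro Y hY
            by_cases hYX : Y = Formula.disj A B
            · rw [hYX]
              simp only [Formula.eval, Bool.or_eq_true]
              exact Or.inr (hv B (List.mem_cons_self))
            · exact hv Y (List.mem_cons_of_mem _ ((List.mem_erase_of_ne hYX).2 hY))
          · exact fun D hD Γ' hΓ' pD => hκ D hD Γ'
              ((Set.subset_insert _ _).trans hΓ') pD
    | imp A B =>
        have hf : fsize (Formula.imp A B) = fsize A + fsize B + 1 := rfl
        have hAS : A ∈ S := hSsub _ _ (Subf.impL (Subf.refl A)) hXS
        have hBS : B ∈ S := hSsub _ _ (Subf.impR (Subf.refl B)) hXS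
        refine IH (n-1) (by omega) (P.erase (Formula.imp A B)) (A :: Θ) Γ
          ?_ ?_ ?_ ?_ ?_ ?_
        · simp only [List.map_cons, List.sum_cons]; omega
        · exact fun Y hY => hPS Y (List.mem_of_mem_erase hY)
        · exact fun Y hY => hPΓ Y (List.mem_of_mem_erase hY)
        · intro D hD
          rcases List.mem_cons.1 hD with rfl | hD'
          exacts [hAS, hΘS D hD']
        · intro v hv
          by_cases hva : A.eval v = true
          · exact ⟨A, List.mem_cons_self, hva⟩
          · have hvP : ∀ Y ∈ P, Y.eval v = true := by
              intro Y hY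
              by_cases hYX : Y = Formula.imp A B
              · have hva' : A.eval v = false := by
                  cases h' : A.eval v
                  · rfl
                  · exact absurd h' hva
                rw [hYX]; simp [Formula.eval, hva']
              · exact hv Y ((List.mem_erase_of_ne hYX).2 hY)
            obtain ⟨D, hD, hDv⟩ := hsem v hvP
            exact ⟨D, List.mem_cons_of_mem _ hD, hDv⟩
        · intro D hD Γ' hΓ' pD
          rcases List.mem_cons.1 hD with rfl | hD'
          · -- handler for A: use impE with the second branch
            refine prov_impE (hΓ' hXΓ) hXS pD ?_
            refine IH (n-1) (by omega) (B :: P.erase (Formula.imp D B)) Θ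
              (insert B Γ') ?_ ?_ ?_ hΘS ?_ ?_
            · simp only [List.map_cons, List.sum_cons]; omega
            · intro Y hY
              rcases List.mem_cons.1 hY with rfl | hY'
              exacts [hBS, hPS Y (List.mem_of_mem_erase hY')]
            · intro Y hY
              rcases List.mem_cons.1 hY with rfl | hY'
              exacts [Set.mem_insert _ _,
                Set.mem_insert_of_mem _ (hΓ' (hPΓ Y (List.mem_of_mem_erase hY')))]
            · intro v hv
              apply hsem v
              intro Y hY
              by_cases hYX : Y = Formula.imp D B
              · rw [hYX]
                simp only [Formula.eval, Bool.or_eq_true]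
                exact Or.inr (hv B (List.mem_cons_self))
              · exact hv Y (List.mem_cons_of_mem _ ((List.mem_erase_of_ne hYX).2 hY))
            · exact fun E hE Γ'' hΓ'' pE => hκ E hE Γ''
                (hΓ'.trans ((Set.subset_insert _ _).trans hΓ'')) pE
          · exact hκ D hD' Γ' hΓ' pD

theorem eval_continuous (A : Formula) :
    Continuous fun v : ℕ → Bool => Formula.eval v A := by
  induction A with
  | atom n => exact continuous_apply n
  | neg A ih =>
      show Continuous fun v : ℕ → Bool => !(Formula.eval v A)
      exact (continuous_of_discreteTopology (f := Bool.not)).comp ih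
  | conj A B ihA ihB =>
      show Continuous fun v : ℕ → Bool => Formula.eval v A && Formula.eval v B
      exact (continuous_of_discreteTopology
        (f := fun p : Bool × Bool => p.1 && p.2)).comp (ihA.prodMk ihB)
  | disj A B ihA ihB =>
      show Continuous fun v : ℕ → Bool => Formula.eval v A || Formula.eval v B
      exact (continuous_of_discreteTopology
        (f := fun p : Bool × Bool => p.1 || p.2)).comp (ihA.prodMk ihB)
  | imp A B ihA ihB =>
      show Continuous fun v : ℕ → Bool => !(Formula.eval v A) || Formula.eval v B
      exact (continuous_of_discreteTopology
        (f := fun p : Bool × Bool => !p.1 || p.2)).comp (ihA.prodMk ihB)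

/-- Compactness: a semantic consequence of `Γ` is a consequence of a finite
sublist of `Γ`. -/
theorem compactness (Γ : Set Formula) (A : Formula)
    (h : ∀ v : ℕ → Bool, (∀ B ∈ Γ, B.eval v = true) → A.eval v = true) :
    ∃ L : List Formula, (∀ B ∈ L, B ∈ Γ) ∧
      ∀ v : ℕ → Bool, (∀ B ∈ L, B.eval v = true) → A.eval v = true := by
  classical
  set K : Set (ℕ → Bool) := {v | Formula.eval v A = false} with hK
  have hKcl : IsClosed K :=
    (isClosed_discrete {false}).preimage (eval_continuous A)
  have hKc : IsCompact K := hKcl.isCompact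
  have hcover : K ⊆ ⋃ B : Γ, {v | Formula.eval v (B : Formula) = false} := by
    intro v hv
    have : ¬ ∀ B ∈ Γ, Formula.eval v B = true := by
      intro hall
      have := h v hall
      rw [Set.mem_setOf_eq] at hv
      simp [this] at hv
    push_neg at this
    obtain ⟨B, hB, hBv⟩ := this
    have hBf : Formula.eval v B = false := by
      cases h' : Formula.eval v B
      · rfl
      · exact absurd h' hBv
    exact Set.mem_iUnion.2 ⟨⟨B, hB⟩, hBf⟩
  obtain ⟨t, ht⟩ := hKc.elim_finite_subcover
    (fun B : Γ => {v | Formula.eval v (B : Formula) = false})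
    (fun B => (isOpen_discrete {false}).preimage (eval_continuous B)) hcover
  refine ⟨t.toList.map Subtype.val, ?_, ?_⟩
  · intro B hB
    simp only [List.mem_map, Finset.mem_toList] at hB
    obtain ⟨⟨B', hB'⟩, _, rfl⟩ := hB
    exact hB'
  · intro v hv
    by_contra hA
    have hvK : v ∈ K := by
      rw [hK, Set.mem_setOf_eq]
      cases h' : Formula.eval v A
      · rfl
      · exact absurd h' hA
    have := ht hvK
    simp only [Set.mem_iUnion] at this
    obtain ⟨B, hBt, hBv⟩ := this
    have hBL : (B : Formula) ∈ t.toList.map Subtype.val := by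
      simp only [List.mem_map, Finset.mem_toList]
      exact ⟨B, hBt, rfl⟩
    rw [Set.mem_setOf_eq] at hBv
    rw [hv _ hBL] at hBv
    exact absurd hBv (by simp)

end CAux

/-- If every Boolean valuation making all formulas of `Γ`
true makes `A` true, then there is a deduction of `A` from assumptions in `Γ`
in the system C in which every occurring formula is a subformula of `A` or of
some formula in `Γ`. -/
theorem semantic_consequence_subformula_deduction (Γ : Set Formula) (A : Formula)
    (h : ∀ v : ℕ → Bool, (∀ B ∈ Γ, B.eval v = true) → A.eval v = true) :
    ∃ d : PT, d.wf ∧ d.concl = A ∧ d.assumptions ⊆ Γ ∧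
      ∀ F ∈ d.formulas, Subf F A ∨ ∃ G ∈ Γ, Subf F G := by
  classical
  obtain ⟨L, hLΓ, hL⟩ := CAux.compactness Γ A h
  set S : Set Formula := {F | Subf F A ∨ ∃ G ∈ Γ, Subf F G} with hS
  have hSsub : ∀ F G, Subf F G → G ∈ S → F ∈ S := by
    rintro F G hFG (h1 | ⟨G', hG', h2⟩)
    · exact Or.inl (CAux.subf_trans hFG h1)
    · exact Or.inr ⟨G', hG', CAux.subf_trans hFG h2⟩
  have hprov : CAux.Prov S {x | x ∈ L} A := by
    refine CAux.main S hSsub A (Or.inl (Subf.refl A))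
      ((L.map CAux.fsize).sum + (([A] : List Formula).map CAux.fsize).sum)
      L [A] {x | x ∈ L} le_rfl ?_ (fun X hX => hX) ?_ ?_ ?_
    · exact fun X hX => Or.inr ⟨X, hLΓ X hX, Subf.refl X⟩
    · intro D hD
      rw [List.mem_singleton] at hD
      exact hD ▸ Or.inl (Subf.refl A)
    · intro v hv
      exact ⟨A, List.mem_singleton_self A, hL v hv⟩
    · intro D hD Γ' _ pD
      rw [List.mem_singleton] at hD
      exact hD ▸ pD
  obtain ⟨d, h1, h2, _, h4, h5⟩ := hprov
  refine ⟨d, h1, h2, ?_, fun F hF => h5 F hF⟩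
  intro F hF
  obtain ⟨ℓ, hℓ⟩ := hF
  exact hLΓ F (h4 _ hℓ)
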